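/- Let s, t : Fin M → ℝ and let σ be a permutation of Fin M whose matching is unidirectional, i.e., for every y ∈ ℝ there do not exist i, j with s(i) < y < t(σ(i)) and t(σ(j)) < y < s(j). Then the matching cost equals the integral of |F|: ∑_{i} |s(i) − t(σ(i))| = ∫_ℝ |F(y)| dy. -/

import Mathlib

open Finset
open MeasureTheory

/-- If the matching determined by `σ` is unidirectional, then its cost equals the
integral over `ℝ` of `|F|`, where `F(y) = #{i | s i < y} - #{i | t i < y}`. -/
theorem unidirectional_cost_eq_integral (M : ℕ) (s t : Fin M → ℝ)
    (σ : Equiv.Perm (Fin M))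
    (huni : ∀ y : ℝ, ¬ ∃ i j : Fin M,
      (s i < y ∧ y < t (σ i)) ∧ (t (σ j) < y ∧ y < s j)) :
    ∑ i, |s i - t (σ i)| =
      ∫ y : ℝ, |(((univ.filter fun i => s i < y).card : ℤ)
        - ((univ.filter fun i => t i < y).card : ℤ) : ℝ)| := by
  set g : Fin M → ℝ → ℝ := fun i y =>
    (if s i < y then (1:ℝ) else 0) - (if t (σ i) < y then (1:ℝ) else 0) with hg
  have habs : ∀ i, (fun y => |g i y|) =
      Set.indicator (Set.Ioc (min (s i) (t (σ i))) (max (s i) (t (σ i)))) (fun _ => (1:ℝ)) := by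
    intro i
    funext y
    by_cases h1 : s i < y <;> by_cases h2 : t (σ i) < y
    · rw [Set.indicator_of_notMem (fun hm => absurd hm.2 (not_le.2 (max_lt h1 h2)))]
      simp [hg, h1, h2]
    · rw [Set.indicator_of_mem (Set.mem_Ioc.mpr
        ⟨lt_of_le_of_lt (min_le_left _ _) h1, (not_lt.1 h2).trans (le_max_right _ _)⟩)]
      simp [hg, h1, h2]
    · rw [Set.indicator_of_mem (Set.mem_Ioc.mpr
        ⟨lt_of_le_of_lt (min_le_right _ _) h2, (not_lt.1 h1).trans (le_max_left _ _)⟩)]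
      simp [hg, h1, h2]
    · rw [Set.indicator_of_notMem
        (fun hm => absurd hm.1 (not_lt.2 (le_min (not_lt.1 h1) (not_lt.1 h2))))]
      simp [hg, h1, h2]
  have hint : ∀ i, Integrable (fun y => |g i y|) := by
    intro i
    rw [habs i]
    exact (integrable_indicator_iff measurableSet_Ioc).2
      (integrableOn_const measure_Ioc_lt_top.ne)
  have hIi : ∀ i, ∫ y : ℝ, |g i y| = |s i - t (σ i)| := by
    intro i
    rw [habs i, integral_indicator_const _ measurableSet_Ioc, Real.volume_real_Ioc_of_le min_le_max, smul_eq_mul,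
      mul_one,
      max_sub_min_eq_abs, abs_sub_comm]
  have hFsum : ∀ y : ℝ, (((univ.filter fun i => s i < y).card : ℤ)
        - ((univ.filter fun i => t i < y).card : ℤ) : ℝ) = ∑ i, g i y := by
    intro y
    rw [Finset.sum_sub_distrib]
    have h1 : ∑ i, (if t (σ i) < y then (1:ℝ) else 0) = ∑ i, (if t i < y then (1:ℝ) else 0) :=
      Equiv.sum_comp σ (fun i => if t i < y then (1:ℝ) else 0)
    rw [h1]
    push_cast [Finset.card_filter]
    simp [apply_ite]
  have hnull : (volume ((⋃ i, {t (σ i)}) ∪ (⋃ i, {s i}) : Set ℝ)) = 0 :=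
    measure_union_null (measure_iUnion_null fun i => measure_singleton _)
      (measure_iUnion_null fun i => measure_singleton _)
  have hae : (fun y : ℝ => |(((univ.filter fun i => s i < y).card : ℤ)
        - ((univ.filter fun i => t i < y).card : ℤ) : ℝ)|)
      =ᵐ[volume] fun y => ∑ i, |g i y| := by
    filter_upwards [measure_eq_zero_iff_ae_notMem.mp hnull] with y hy
    simp only [Set.mem_union, Set.mem_iUnion, Set.mem_singleton_iff, not_or, not_exists] at hy
    obtain ⟨hyt, hys⟩ := hy
    rw [hFsum y]
    have key : (∀ i, 0 ≤ g i y) ∨ (∀ i, g i y ≤ 0) := by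
      by_contra hcon
      push_neg at hcon
      obtain ⟨⟨i, hi⟩, j, hj⟩ := hcon
      have hi' : t (σ i) < y ∧ ¬ s i < y := by
        by_cases h1 : s i < y <;> by_cases h2 : t (σ i) < y
        · simp only [hg, if_pos h1, if_pos h2] at hi; norm_num at hi
        · simp only [hg, if_pos h1, if_neg h2] at hi; norm_num at hi
        · exact ⟨h2, h1⟩
        · simp only [hg, if_neg h1, if_neg h2] at hi; norm_num at hi
      have hj' : s j < y ∧ ¬ t (σ j) < y := by
        by_cases h1 : s j < y <;> by_cases h2 : t (σ j) < y
        · simp only [hg, if_pos h1, if_pos h2] at hj; norm_num at hj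
        · exact ⟨h1, h2⟩
        · simp only [hg, if_neg h1, if_pos h2] at hj; norm_num at hj
        · simp only [hg, if_neg h1, if_neg h2] at hj; norm_num at hj
      exact huni y ⟨j, i, ⟨hj'.1, lt_of_le_of_ne (not_lt.1 hj'.2) (hyt j)⟩,
        hi'.1, lt_of_le_of_ne (not_lt.1 hi'.2) (hys i)⟩
    rcases key with hpos | hneg
    · rw [Finset.abs_sum_of_nonneg (fun i _ => hpos i)]
      exact Finset.sum_congr rfl fun i _ => (abs_of_nonneg (hpos i)).symm
    · rw [abs_of_nonpos (Finset.sum_nonpos fun i _ => hneg i), ← Finset.sum_neg_distrib]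
      exact Finset.sum_congr rfl fun i _ => (abs_of_nonpos (hneg i)).symm
  calc ∑ i, |s i - t (σ i)| = ∑ i, ∫ y : ℝ, |g i y| := by simp [hIi]
    _ = ∫ y : ℝ, ∑ i, |g i y| := (integral_finset_sum univ (fun i _ => hint i)).symm
    _ = _ := (integral_congr_ae hae).symm
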